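/- Let $A \in \mathbb{C}^{n\times n}$, $B \in \mathbb{C}^{n\times m}$, $C \in \mathbb{C}^{p\times n}$, $\tau > 0$, $\hat{\lambda}_i \in \mathbb{C}$ with $-\hat{\lambda}_i I - A$ invertible, and $\hat{l}_i \in \mathbb{C}^{p}$. Set $C_\tau = C\exp(\tau A)$, $H_{\mathcal{T}}(s) = \begin{bmatrix}C\\ -C_\tau\end{bmatrix}(sI-A)^{-1}B$, $\tilde{l}_i = \begin{bmatrix}\hat{l}_i \\ e^{\hat{\lambda}_i\tau}\hat{l}_i\end{bmatrix}$, $G(s) = C(sI-A)^{-1}B$, $G_\tau(s) = -e^{-s\tau}C(sI-A)^{-1}\exp(\tau A)B$, and $T_\tau(s) = G_\tau(s) + G(s)$. Then $\tilde{l}_i^T H_{\mathcal{T}}(-\hat{\lambda}_i) = \hat{l}_i^T T_\tau(-\hat{\lambda}_i)$. Consequently, for a reduced model $(\hat{A},\hat{B},\hat{C})$ with the analogous definitions $\hat{H}_{\mathcal{T}}$, $\hat{T}_\tau$, the tangential interpolation condition $\tilde{l}_i^T H_{\mathcal{T}}(-\hat{\lambda}_i) = \tilde{l}_i^T\hat{H}_{\mathcal{T}}(-\hat{\lambda}_i)$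 holds if and only if $\hat{l}_i^T T_\tau(-\hat{\lambda}_i) = \hat{l}_i^T\hat{T}_\tau(-\hat{\lambda}_i)$ holds. -/

import Mathlib

open Matrix NormedSpace

lemma comm_nonsing_inv {k : ℕ} {E M : Matrix (Fin k) (Fin k) ℂ}
    (h : E * M = M * E) : E * M⁻¹ = M⁻¹ * E := by
  by_cases hd : IsUnit M.det
  · have h1 : M⁻¹ * M = 1 := Matrix.nonsing_inv_mul M hd
    have h2 : M * M⁻¹ = 1 := Matrix.mul_nonsing_inv M hd
    calc E * M⁻¹ = M⁻¹ * M * (E * M⁻¹) := by rw [h1, one_mul]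
      _ = M⁻¹ * (M * E) * M⁻¹ := by simp only [Matrix.mul_assoc]
      _ = M⁻¹ * (E * M) * M⁻¹ := by rw [h]
      _ = M⁻¹ * E * (M * M⁻¹) := by simp only [Matrix.mul_assoc]
      _ = M⁻¹ * E := by rw [h2, Matrix.mul_one]
  · rw [Matrix.nonsing_inv_apply_not_isUnit M hd, Matrix.mul_zero, Matrix.zero_mul]

lemma exp_comm_resolvent {k : ℕ} (A : Matrix (Fin k) (Fin k) ℂ) (τ lam : ℂ) :
    NormedSpace.exp (τ • A) * (lam • (1 : Matrix (Fin k) (Fin k) ℂ) - A)⁻¹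
      = (lam • (1 : Matrix (Fin k) (Fin k) ℂ) - A)⁻¹ * NormedSpace.exp (τ • A) := by
  apply comm_nonsing_inv
  letI : SeminormedRing (Matrix (Fin k) (Fin k) ℂ) := Matrix.linftyOpSemiNormedRing
  letI : NormedRing (Matrix (Fin k) (Fin k) ℂ) := Matrix.linftyOpNormedRing
  letI : NormedAlgebra ℂ (Matrix (Fin k) (Fin k) ℂ) := Matrix.linftyOpNormedAlgebra
  have hc : Commute (τ • A) (lam • (1 : Matrix (Fin k) (Fin k) ℂ) - A) := by
    apply Commute.sub_right
    · exact (Commute.one_right _).smul_right lam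
    · exact (Commute.refl A).smul_left τ
  exact (hc.exp_left)

lemma vecMul_smulMat {p q : ℕ} (c : ℂ) (v : Fin p → ℂ) (M : Matrix (Fin p) (Fin q) ℂ) :
    Matrix.vecMul v (c • M) = c • Matrix.vecMul v M := by
  ext j
  simp [Matrix.vecMul, dotProduct, Finset.mul_sum, mul_left_comm]

set_option maxHeartbeats 800000 in
/-- Key computation, valid for any state dimension (no invertibility needed). -/
lemma key_calc {k m p : ℕ} (A : Matrix (Fin k) (Fin k) ℂ)
    (B : Matrix (Fin k) (Fin m) ℂ) (C : Matrix (Fin p) (Fin k) ℂ)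
    (τ lam : ℂ) (lhat : Fin p → ℂ) :
    Matrix.vecMul (Sum.elim lhat (fun j => Complex.exp (lam * τ) * lhat j))
        (Matrix.fromRows C (-(C * NormedSpace.exp (τ • A))) *
          ((-lam) • (1 : Matrix (Fin k) (Fin k) ℂ) - A)⁻¹ * B)
      = Matrix.vecMul lhat
        (-(Complex.exp (lam * τ) •
            (C * ((-lam) • (1 : Matrix (Fin k) (Fin k) ℂ) - A)⁻¹ * (NormedSpace.exp (τ • A) * B))) +
          C * ((-lam) • (1 : Matrix (Fin k) (Fin k) ℂ) - A)⁻¹ * B) := by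
    set X := ((-lam) • (1 : Matrix (Fin k) (Fin k) ℂ) - A)⁻¹ with hX
    set E := NormedSpace.exp (τ • A) with hE
    have hcomm : E * X = X * E := exp_comm_resolvent A τ (-lam)
    have hfun : (fun j => Complex.exp (lam * τ) * lhat j)
        = Complex.exp (lam * τ) • lhat := rfl
    have hrew : C * E * X * B = C * X * (E * B) := by
      rw [Matrix.mul_assoc C E X, hcomm, ← Matrix.mul_assoc, Matrix.mul_assoc]
    rw [Matrix.fromRows_mul, Matrix.fromRows_mul, Matrix.sumElim_vecMul_fromRows,
      hfun, Matrix.neg_mul, Matrix.neg_mul, hrew]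
    simp only [Matrix.vecMul_add, Matrix.vecMul_neg, Matrix.smul_vecMul, vecMul_smulMat, smul_neg]
    abel

theorem time_limited_interp_b21_iff_g2
    {n m p : ℕ}
    (A : Matrix (Fin n) (Fin n) ℂ)
    (B : Matrix (Fin n) (Fin m) ℂ)
    (C : Matrix (Fin p) (Fin n) ℂ)
    (τ : ℝ) (hτ : 0 < τ)
    (lam : ℂ) (hinvA : IsUnit ((-lam) • (1 : Matrix (Fin n) (Fin n) ℂ) - A))
    (lhat : Fin p → ℂ)
    (Ctau : Matrix (Fin p) (Fin n) ℂ) (hCtau : Ctau = C * NormedSpace.exp ((τ : ℂ) • A))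
    (HT : ℂ → Matrix (Fin p ⊕ Fin p) (Fin m) ℂ)
    (hHT : ∀ s : ℂ, HT s =
      Matrix.fromRows C (-Ctau) * (s • (1 : Matrix (Fin n) (Fin n) ℂ) - A)⁻¹ * B)
    (ltilde : (Fin p ⊕ Fin p) → ℂ)
    (hltilde : ltilde = Sum.elim lhat (fun k => Complex.exp (lam * τ) * lhat k))
    (G : ℂ → Matrix (Fin p) (Fin m) ℂ)
    (hG : ∀ s : ℂ, G s = C * (s • (1 : Matrix (Fin n) (Fin n) ℂ) - A)⁻¹ * B)
    (Gtau : ℂ → Matrix (Fin p) (Fin m) ℂ)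
    (hGtau : ∀ s : ℂ, Gtau s = -(Complex.exp (-(s * τ)) •
      (C * (s • (1 : Matrix (Fin n) (Fin n) ℂ) - A)⁻¹ * (NormedSpace.exp ((τ : ℂ) • A) * B))))
    (Ttau : ℂ → Matrix (Fin p) (Fin m) ℂ)
    (hTtau : ∀ s : ℂ, Ttau s = Gtau s + G s) :
    Matrix.vecMul ltilde (HT (-lam)) = Matrix.vecMul lhat (Ttau (-lam)) ∧
      ∀ (r : ℕ) (Ahat : Matrix (Fin r) (Fin r) ℂ) (Bhat : Matrix (Fin r) (Fin m) ℂ)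
        (Chat : Matrix (Fin p) (Fin r) ℂ)
        (HThat : Matrix (Fin p ⊕ Fin p) (Fin m) ℂ)
        (Tthat : Matrix (Fin p) (Fin m) ℂ),
        HThat = Matrix.fromRows Chat (-(Chat * NormedSpace.exp ((τ : ℂ) • Ahat))) *
            ((-lam) • (1 : Matrix (Fin r) (Fin r) ℂ) - Ahat)⁻¹ * Bhat →
        Tthat = -(Complex.exp (-((-lam) * τ)) •
            (Chat * ((-lam) • (1 : Matrix (Fin r) (Fin r) ℂ) - Ahat)⁻¹ *
              (NormedSpace.exp ((τ : ℂ) • Ahat) * Bhat))) +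
            Chat * ((-lam) • (1 : Matrix (Fin r) (Fin r) ℂ) - Ahat)⁻¹ * Bhat →
        (Matrix.vecMul ltilde (HT (-lam)) = Matrix.vecMul ltilde HThat ↔
          Matrix.vecMul lhat (Ttau (-lam)) = Matrix.vecMul lhat Tthat) := by
  have hexp : (-(-lam * (τ : ℂ))) = lam * τ := by ring
  have h1 : Matrix.vecMul ltilde (HT (-lam)) = Matrix.vecMul lhat (Ttau (-lam)) := by
    rw [hHT, hTtau, hGtau, hG, hCtau, hltilde, hexp]
    exact key_calc A B C (τ : ℂ) lam lhat
  refine ⟨h1, fun r Ahat Bhat Chat HThat Tthat hH hT => ?_⟩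
  have h2 : Matrix.vecMul ltilde HThat = Matrix.vecMul lhat Tthat := by
    rw [hH, hT, hltilde, hexp]
    exact key_calc Ahat Bhat Chat (τ : ℂ) lam lhat
  rw [h1, h2]
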